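/- For C > 0 and nonnegative integers p, q, if a ∈ A_C with a ∈ t^p ℂ[[t]] and b ∈ A_C with b ∈ t^q ℂ[[t]], then ‖ab‖_C ≤ (p! q! / (p+q)!) · ‖a‖_C · ‖b‖_C. -/

import Mathlib

open PowerSeries

/-- The norm `‖a‖_C = ∑_{j≥0} |a_j| C^j / j!` on formal power series. -/
noncomputable def pNorm (C : ℝ) (a : PowerSeries ℂ) : ℝ :=
  ∑' j : ℕ, ‖coeff j a‖ * C ^ j / (Nat.factorial j : ℝ)

/-- Membership in `A_C`: the series `∑ |a_j| C^j / j!` converges. -/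
def MemAC (C : ℝ) (a : PowerSeries ℂ) : Prop :=
  Summable fun j : ℕ => ‖coeff j a‖ * C ^ j / (Nat.factorial j : ℝ)

lemma nat_fact_key (p q i j : ℕ) (hi : p ≤ i) (hj : q ≤ j) :
    Nat.factorial i * Nat.factorial j * Nat.factorial (p + q) ≤
      Nat.factorial p * Nat.factorial q * Nat.factorial (i + j) := by
  have h1 : (p + q).choose p * p.factorial * q.factorial = (p + q).factorial := by
    have := Nat.choose_mul_factorial_mul_factorial (Nat.le_add_right p q)
    simpa using this
  have h2 : (i + j).choose i * i.factorial * j.factorial = (i + j).factorial := by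
    have := Nat.choose_mul_factorial_mul_factorial (Nat.le_add_right i j)
    simpa using this
  have hch : (p + q).choose p ≤ (i + j).choose i := by
    have e1 : (p + j).choose p = (p + j).choose j := by
      have := Nat.choose_symm (Nat.le_add_right p j)
      simpa using this.symm
    have e2 : (i + j).choose j = (i + j).choose i := by
      have := Nat.choose_symm (Nat.le_add_left j i)
      simpa using this.symm
    calc (p + q).choose p ≤ (p + j).choose p :=
          Nat.choose_le_choose p (Nat.add_le_add_left hj p)
      _ = (p + j).choose j := e1
      _ ≤ (i + j).choose j := Nat.choose_le_choose j (Nat.add_le_add_right hi j)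
      _ = (i + j).choose i := e2
  calc i.factorial * j.factorial * (p + q).factorial
      = (p + q).choose p * (p.factorial * q.factorial * (i.factorial * j.factorial)) := by
        rw [← h1]; ring
    _ ≤ (i + j).choose i * (p.factorial * q.factorial * (i.factorial * j.factorial)) :=
        Nat.mul_le_mul_right _ hch
    _ = p.factorial * q.factorial * (i + j).factorial := by rw [← h2]; ring

/-- If `a ∈ A_C ∩ t^p ℂ[[t]]` and `b ∈ A_C ∩ t^q ℂ[[t]]`, then
`‖a * b‖_C ≤ (p! q! / (p+q)!) ‖a‖_C ‖b‖_C`. -/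
theorem stmt_1 (C : ℝ) (hC : 0 < C) (p q : ℕ) (a b : PowerSeries ℂ)
    (ha : MemAC C a) (hb : MemAC C b)
    (hap : ∀ j < p, coeff j a = 0) (hbq : ∀ j < q, coeff j b = 0) :
    pNorm C (a * b) ≤
      ((Nat.factorial p : ℝ) * (Nat.factorial q : ℝ) / (Nat.factorial (p + q) : ℝ)) *
        (pNorm C a * pNorm C b) := by
  set F : ℕ → ℝ := fun j => ‖coeff j a‖ * C ^ j / (Nat.factorial j : ℝ) with hF
  set G : ℕ → ℝ := fun j => ‖coeff j b‖ * C ^ j / (Nat.factorial j : ℝ) with hG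
  set K : ℝ := (Nat.factorial p : ℝ) * (Nat.factorial q : ℝ) / (Nat.factorial (p + q) : ℝ)
    with hK
  have hFnn : ∀ i, 0 ≤ F i := fun i => by positivity
  have hGnn : ∀ i, 0 ≤ G i := fun i => by positivity
  have hKnn : 0 ≤ K := by positivity
  have hmul : Summable fun x : ℕ × ℕ => F x.1 * G x.2 :=
    Summable.mul_of_nonneg ha hb hFnn hGnn
  have hanti : Summable fun n => ∑ kl ∈ Finset.HasAntidiagonal.antidiagonal n, F kl.1 * G kl.2 :=
    summable_sum_mul_antidiagonal_of_summable_mul hmul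
  -- key termwise bound
  have key : ∀ n, ‖coeff n (a * b)‖ * C ^ n / (Nat.factorial n : ℝ) ≤
      K * ∑ kl ∈ Finset.HasAntidiagonal.antidiagonal n, F kl.1 * G kl.2 := by
    intro n
    rw [Finset.mul_sum]
    have habs : ‖coeff n (a * b)‖ ≤
        ∑ kl ∈ Finset.HasAntidiagonal.antidiagonal n, ‖coeff kl.1 a‖ * ‖coeff kl.2 b‖ := by
      rw [PowerSeries.coeff_mul]
      refine le_trans (norm_sum_le _ _) ?_
      exact le_of_eq (Finset.sum_congr rfl fun kl _ => norm_mul _ _)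
    calc ‖coeff n (a * b)‖ * C ^ n / (Nat.factorial n : ℝ)
        ≤ (∑ kl ∈ Finset.HasAntidiagonal.antidiagonal n,
            ‖coeff kl.1 a‖ * ‖coeff kl.2 b‖) * C ^ n /
              (Nat.factorial n : ℝ) := by
          gcongr
      _ = ∑ kl ∈ Finset.HasAntidiagonal.antidiagonal n,
            ‖coeff kl.1 a‖ * ‖coeff kl.2 b‖ * C ^ n /
              (Nat.factorial n : ℝ) := by
          rw [Finset.sum_mul, Finset.sum_div]
      _ ≤ ∑ kl ∈ Finset.HasAntidiagonal.antidiagonal n, K * (F kl.1 * G kl.2) := by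
          refine Finset.sum_le_sum fun kl hkl => ?_
          obtain ⟨i, j⟩ := kl
          rw [Finset.HasAntidiagonal.mem_antidiagonal] at hkl
          obtain rfl : i + j = n := hkl
          by_cases hip : i < p
          · rw [hap i hip]
            simp
            positivity
          by_cases hjq : j < q
          · rw [hbq j hjq]
            simp
            positivity
          push_neg at hip hjq
          have hfact := nat_fact_key p q i j hip hjq
          have hfactR : (Nat.factorial i : ℝ) * Nat.factorial j * Nat.factorial (p + q) ≤
              (Nat.factorial p : ℝ) * Nat.factorial q * Nat.factorial (i + j) := by
            exact_mod_cast hfact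
          have hiF : (0:ℝ) < Nat.factorial i := by positivity
          have hjF : (0:ℝ) < Nat.factorial j := by positivity
          have hpqF : (0:ℝ) < Nat.factorial (p + q) := by positivity
          have hijF : (0:ℝ) < Nat.factorial (i + j) := by positivity
          have h1 : (1:ℝ) / Nat.factorial (i + j) ≤
              K / ((Nat.factorial i : ℝ) * Nat.factorial j) := by
            rw [hK, div_div, div_le_div_iff₀ hijF (by positivity)]
            nlinarith [hfactR]
          have hA : (0:ℝ) ≤ ‖coeff i a‖ * ‖coeff j b‖ * C ^ (i + j) :=
            by positivity
          calc ‖coeff i a‖ * ‖coeff j b‖ * C ^ (i + j) /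
                (Nat.factorial (i + j) : ℝ)
              = ‖coeff i a‖ * ‖coeff j b‖ * C ^ (i + j) *
                  ((1:ℝ) / Nat.factorial (i + j)) := by ring
            _ ≤ ‖coeff i a‖ * ‖coeff j b‖ * C ^ (i + j) *
                  (K / ((Nat.factorial i : ℝ) * Nat.factorial j)) :=
                mul_le_mul_of_nonneg_left h1 hA
            _ = K * (F i * G j) := by
                rw [hF, hG]
                simp only
                rw [pow_add]
                field_simp
  have hsum_ab : Summable
      (fun n => ‖coeff n (a * b)‖ * C ^ n / (Nat.factorial n : ℝ)) := by
    refine Summable.of_nonneg_of_le (fun n => by positivity) key (hanti.mul_left K)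
  calc pNorm C (a * b) ≤ ∑' n, K * ∑ kl ∈ Finset.HasAntidiagonal.antidiagonal n, F kl.1 * G kl.2 :=
        Summable.tsum_le_tsum key hsum_ab (hanti.mul_left K)
    _ = K * ∑' n, ∑ kl ∈ Finset.HasAntidiagonal.antidiagonal n, F kl.1 * G kl.2 := tsum_mul_left
    _ = K * (pNorm C a * pNorm C b) := by
        rw [← Summable.tsum_mul_tsum_eq_tsum_sum_antidiagonal ha hb hmul]
        rfl
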